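/- Let m ≥ 1 and let d : ℕ → Fin m be any sequence. Then there exist m' ≥ 1 and an admissible sequence d' : ℕ → Fin m' such that for all n ≥ 1, the number of distinct predecessor sets of words of length n in X_{d'} equals Φ_n(d) + 1: |P_{X_{d'}}(n)| = Φ_n(d) + 1. -/

import Mathlib

namespace BetaShift

variable {A : Type*}

/-- The shift map: `(shift x) n = x (n+1)`. -/
def shift (x : ℕ → A) : ℕ → A := fun n => x (n + 1)

/-- Lexicographic order on one-sided sequences: `x = y`, or there is an index `i`
such that `x j = y j` for all `j < i` and `x i < y i`. -/
def SeqLe [LinearOrder A] (x y : ℕ → A) : Prop :=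
  x = y ∨ ∃ i, (∀ j, j < i → x j = y j) ∧ x i < y i

/-- A word `w` occurs in the sequence `x`. -/
def Occurs (w : List A) (x : ℕ → A) : Prop :=
  ∃ i : ℕ, ∀ j : Fin w.length, x (i + j) = w.get j

/-- `Complexity x n` is the number `Φ_n(x)` of distinct words of length `n` occurring in `x`. -/
noncomputable def Complexity (x : ℕ → A) (n : ℕ) : ℕ :=
  Set.ncard {w : List A | w.length = n ∧ Occurs w x}

/-- A sequence is eventually periodic if there are `p ≥ 1` and `N` with
`d (i + p) = d i` for all `i ≥ N`. -/
def EventuallyPeriodic (d : ℕ → A) : Prop :=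
  ∃ p, 1 ≤ p ∧ ∃ N, ∀ i, N ≤ i → d (i + p) = d i

/-- `(d)_k`, the `k`-letter prefix of the sequence `d`, as a word. -/
def prefixWord (d : ℕ → A) (k : ℕ) : List A := List.ofFn (fun i : Fin k => d i)

variable {m : ℕ}

/-- `d` is admissible: every shift of `d` is lexicographically ≤ `d`,
and `d` is not eventually `0`. -/
def Admissible (d : ℕ → Fin m) : Prop :=
  (∀ i, SeqLe (shift^[i] d) d) ∧ ∀ N, ∃ i, N ≤ i ∧ (d i).val ≠ 0

/-- The one-sided β-shift `X_d` determined by the admissible sequence `d`. -/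
def XSet (d : ℕ → Fin m) : Set (ℕ → Fin m) :=
  {x | ∀ i, SeqLe (shift^[i] x) d}

/-- The language of `X_d`: all words occurring in some point of `X_d`. -/
def Lang (d : ℕ → Fin m) : Set (List (Fin m)) :=
  {w | ∃ x ∈ XSet d, Occurs w x}

/-- The follower set of the word `w` in `X_d`. -/
def Fol (d : ℕ → Fin m) (w : List (Fin m)) : Set (List (Fin m)) :=
  {u | w ++ u ∈ Lang d}

/-- The predecessor set of the word `w` in `X_d`. -/
def Pred (d : ℕ → Fin m) (w : List (Fin m)) : Set (List (Fin m)) :=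
  {s | s ++ w ∈ Lang d}

/-- The extender set of the word `w` in `X_d`. -/
def Ext (d : ℕ → Fin m) (w : List (Fin m)) : Set (List (Fin m) × List (Fin m)) :=
  {p | p.1 ++ w ++ p.2 ∈ Lang d}

/-- `|F(n)|`: the number of distinct follower sets of words of length `n` in `X_d`. -/
noncomputable def FolCount (d : ℕ → Fin m) (n : ℕ) : ℕ :=
  Set.ncard {S | ∃ w ∈ Lang d, w.length = n ∧ S = Fol d w}

/-- `|P(n)|`: the number of distinct predecessor sets of words of length `n` in `X_d`. -/
noncomputable def PredCount (d : ℕ → Fin m) (n : ℕ) : ℕ :=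
  Set.ncard {S | ∃ w ∈ Lang d, w.length = n ∧ S = Pred d w}

/-- `|E(n)|`: the number of distinct extender sets of words of length `n` in `X_d`. -/
noncomputable def ExtCount (d : ℕ → Fin m) (n : ℕ) : ℕ :=
  Set.ncard {S | ∃ w ∈ Lang d, w.length = n ∧ S = Ext d w}

/-- The largest `k ≤ n` such that the `k`-letter prefix of `d` is a suffix of `v`
(`k = 0`, the empty prefix, always works). -/
def classIndex (d : ℕ → Fin m) (n : ℕ) (v : List (Fin m)) : ℕ :=
  Nat.findGreatest (fun k => prefixWord d k <:+ v) n

/-- Lexicographic comparison of (equal-length) words: `u = v`, or at the first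
index where they differ, `u` takes the smaller value. -/
def WordLe [LinearOrder A] (u v : List A) : Prop :=
  u = v ∨ ∃ i, ∃ (hu : i < u.length) (hv : i < v.length),
    (∀ j (hju : j < u.length) (hjv : j < v.length), j < i → u.get ⟨j, hju⟩ = v.get ⟨j, hjv⟩) ∧
    u.get ⟨i, hu⟩ < v.get ⟨i, hv⟩

end BetaShift

open BetaShift

namespace Stmt12

/-- Strict part of `WordLe`. -/
def WLt {A : Type*} [LinearOrder A] (u v : List A) : Prop :=
  ∃ i, ∃ (hu : i < u.length) (hv : i < v.length),
    (∀ j (hju : j < u.length) (hjv : j < v.length), j < i → u.get ⟨j, hju⟩ = v.get ⟨j, hjv⟩) ∧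
    u.get ⟨i, hu⟩ < v.get ⟨i, hv⟩

lemma wordLe_iff {A : Type*} [LinearOrder A] (u v : List A) :
    WordLe u v ↔ u = v ∨ WLt u v := Iff.rfl

lemma shift_iter {A : Type*} (x : ℕ → A) (i n : ℕ) : (shift^[i] x) n = x (n + i) := by
  induction i generalizing x n with
  | zero => rfl
  | succ k ih =>
    rw [Function.iterate_succ_apply, ih]
    simp [shift]; ring_nf

variable {q : ℕ}

/-- Numeric value of a word, base `q`. -/
def val : List (Fin q) → ℕ
  | [] => 0
  | c :: t => c.val * q ^ t.length + val t

lemma val_lt (w : List (Fin q)) : val w < q ^ w.length := by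
  induction w with
  | nil => simp [val]
  | cons c t ih =>
    have hc : c.val + 1 ≤ q := c.isLt
    calc c.val * q ^ t.length + val t < c.val * q ^ t.length + q ^ t.length := by omega
    _ = (c.val + 1) * q ^ t.length := by ring
    _ ≤ q * q ^ t.length := Nat.mul_le_mul_right _ hc
    _ = q ^ (c :: t).length := by rw [List.length_cons]; ring

lemma val_lt_of_wlt : ∀ {u v : List (Fin q)}, u.length = v.length → WLt u v → val u < val v := by
  intro u
  induction u with
  | nil => rintro v h ⟨i, hu, hv, -, -⟩; simp at hu
  | cons a u' ih =>
    rintro v hlen ⟨i, hu, hv, hagree, hlt⟩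
    cases v with
    | nil => simp at hlen
    | cons b v' =>
      simp only [List.length_cons, Nat.succ_inj] at hlen
      cases i with
      | zero =>
        simp only [List.get_eq_getElem, List.getElem_cons_zero] at hlt
        have h1 : val u' < q ^ u'.length := val_lt u'
        have h2 : (0:ℕ) ≤ val v' := Nat.zero_le _
        show a.val * q ^ u'.length + val u' < b.val * q ^ v'.length + val v'
        rw [hlen]
        have : (a.val + 1) * q ^ v'.length ≤ b.val * q ^ v'.length :=
          Nat.mul_le_mul_right _ hlt
        have h1' : val u' < q ^ v'.length := hlen ▸ h1
        nlinarith
      | succ i' =>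
        have hab : a = b := by
          have := hagree 0 (by simp) (by simp) (Nat.succ_pos _)
          simpa using this
        have hwlt : WLt u' v' := by
          refine ⟨i', by simpa using hu, by simpa using hv, ?_, ?_⟩
          · intro j hju hjv hj
            have := hagree (j+1) (by simpa using Nat.succ_lt_succ hju)
              (by simpa using Nat.succ_lt_succ hjv) (Nat.succ_lt_succ hj)
            simpa using this
          · simpa using hlt
        have := ih hlen hwlt
        show a.val * q ^ u'.length + val u' < b.val * q ^ v'.length + val v'
        rw [hab, hlen]; omega

lemma wlt_trichotomy : ∀ {u v : List (Fin q)}, u.length = v.length →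
    u = v ∨ WLt u v ∨ WLt v u := by
  intro u
  induction u with
  | nil => intro v h; left; cases v; rfl; simp at h
  | cons a u' ih =>
    intro v hlen
    cases v with
    | nil => simp at hlen
    | cons b v' =>
      simp only [List.length_cons, Nat.succ_inj] at hlen
      rcases lt_trichotomy a b with hab | hab | hab
      · exact Or.inr (Or.inl ⟨0, by simp, by simp, by intro j _ _ h; omega, by simpa using hab⟩)
      · rcases ih hlen with he | hw | hw
        · left; rw [hab, he]
        · refine Or.inr (Or.inl ?_)
          obtain ⟨i, hu, hv, hagree, hlt⟩ := hw
          refine ⟨i+1, by simpa using Nat.succ_lt_succ hu, by simpa using Nat.succ_lt_succ hv,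
            ?_, by simpa using hlt⟩
          intro j hju hjv hj
          cases j with
          | zero => simpa using hab
          | succ j' =>
            have := hagree j' (by simpa using hju) (by simpa using hjv) (by omega)
            simpa using this
        · refine Or.inr (Or.inr ?_)
          obtain ⟨i, hu, hv, hagree, hlt⟩ := hw
          refine ⟨i+1, by simpa using Nat.succ_lt_succ hu, by simpa using Nat.succ_lt_succ hv,
            ?_, by simpa using hlt⟩
          intro j hju hjv hj
          cases j with
          | zero => simpa using hab.symm
          | succ j' =>
            have := hagree j' (by simpa using hju) (by simpa using hjv) (by omega)
            simpa using this
      · exact Or.inr (Or.inr ⟨0, by simp, by simp, by intro j _ _ h; omega, by simpa using hab⟩)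

lemma wordLe_iff_val_le {u v : List (Fin q)} (h : u.length = v.length) :
    WordLe u v ↔ val u ≤ val v := by
  constructor
  · rintro (rfl | hw)
    · exact le_rfl
    · exact (val_lt_of_wlt h hw).le
  · intro hval
    rcases wlt_trichotomy h with he | hw | hw
    · exact Or.inl he
    · exact Or.inr hw
    · exact absurd (val_lt_of_wlt h.symm hw) (by omega)

lemma eq_of_val_eq {u v : List (Fin q)} (h : u.length = v.length) (hv : val u = val v) :
    u = v := by
  rcases wlt_trichotomy h with he | hw | hw
  · exact he
  · exact absurd (val_lt_of_wlt h hw) (by omega)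
  · exact absurd (val_lt_of_wlt h.symm hw) (by omega)


variable {m : ℕ}

def M (m : ℕ) : Fin (m + 2) := ⟨m + 1, by omega⟩

def D (d : ℕ → Fin m) : ℕ → Fin (m + 2)
  | 0 => M m
  | k + 1 => ⟨(d k).val + 1, by have := (d k).isLt; omega⟩

variable (d : ℕ → Fin m)

lemma D_zero : D d 0 = M m := rfl

lemma D_val_pos {k : ℕ} (hk : 1 ≤ k) : 1 ≤ (D d k).val := by
  cases k with
  | zero => omega
  | succ j => simp [D]

lemma D_val_le {k : ℕ} (hk : 1 ≤ k) : (D d k).val ≤ m := by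
  cases k with
  | zero => omega
  | succ j => have := (d j).isLt; simp [D]

lemma D_ne_M {k : ℕ} (hk : 1 ≤ k) : D d k ≠ M m := by
  intro h
  have := D_val_le d hk
  rw [h] at this
  simp [M] at this

lemma admissible_D : Admissible (D d) := by
  constructor
  · intro i
    cases i with
    | zero => exact Or.inl rfl
    | succ k =>
      refine Or.inr ⟨0, fun j hj => absurd hj (by omega), ?_⟩
      show (shift^[k+1] (D d)) 0 < D d 0
      rw [shift_iter]
      rw [Fin.lt_def]
      have h1 := D_val_le d (show 1 ≤ 0 + (k+1) by omega)
      simp only [D_zero, M]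
      omega
  · intro N
    refine ⟨N + 1, by omega, ?_⟩
    have := D_val_pos d (show 1 ≤ N + 1 by omega)
    omega

def pw (k : ℕ) : List (Fin (m + 2)) := prefixWord (D d) k
def win (n t : ℕ) : List (Fin (m + 2)) := List.ofFn (fun i : Fin n => D d (t + i))

@[simp] lemma pw_length (k : ℕ) : (pw d k).length = k := by simp [pw, prefixWord]
@[simp] lemma win_length (n t : ℕ) : (win d n t).length = n := by simp [win]

lemma pw_getElem (k i : ℕ) (h : i < (pw d k).length) : (pw d k)[i] = D d i := by
  simp [pw, prefixWord]

lemma win_getElem (n t i : ℕ) (h : i < (win d n t).length) : (win d n t)[i] = D d (t + i) := by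
  simp [win]

lemma pw_add (t n : ℕ) : pw d (t + n) = pw d t ++ win d n t := by
  apply List.ext_getElem
  · simp
  · intro i h1 h2
    rw [pw_getElem]
    by_cases hi : i < t
    · rw [List.getElem_append_left (by simpa using hi), pw_getElem]
    · rw [List.getElem_append_right (by simpa using hi), win_getElem]
      congr 1
      simp
      omega

/-- The language condition for `D d`. -/
def LC (w : List (Fin (m + 2))) : Prop :=
  ∀ p (hp : p < w.length), w[p] = M m → WordLe (w.drop p) (pw d (w.length - p))

lemma lang_iff (w : List (Fin (m + 2))) : w ∈ Lang (D d) ↔ LC d w := by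
  constructor
  · rintro ⟨x, hx, i0, hocc⟩ p hp hM
    have hx' := hx (i0 + p)
    have hval : ∀ j (hj : p + j < w.length), x (j + (i0 + p)) = w[p + j] := by
      intro j hj
      have := hocc ⟨p + j, hj⟩
      simp only [List.get_eq_getElem] at this
      rw [← this]
      congr 1
      omega
    rcases hx' with heq | ⟨j, hagree, hlt⟩
    · left
      apply List.ext_getElem
      · simp
      · intro i h1 h2
        rw [pw_getElem, List.getElem_drop, ← hval i (by simp at h1; omega)]
        rw [show x (i + (i0 + p)) = (shift^[i0+p] x) i from (shift_iter x _ _).symm, heq]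
    · rw [shift_iter] at hlt
      by_cases hj : j < w.length - p
      · right
        refine ⟨j, by simp; omega, by simp; omega, ?_, ?_⟩
        · intro j' hju hjv hj'
          simp only [List.get_eq_getElem, List.getElem_drop, pw_getElem]
          rw [← hval j' (by simp at hju; omega)]
          rw [show x (j' + (i0 + p)) = (shift^[i0+p] x) j' from (shift_iter x _ _).symm]
          exact hagree j' hj'
        · simp only [List.get_eq_getElem, List.getElem_drop, pw_getElem]
          rw [← hval j (by omega)]
          exact hlt
      · left
        apply List.ext_getElem
        · simp
        · intro i h1 h2
          rw [pw_getElem, List.getElem_drop, ← hval i (by simp at h1; omega)]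
          rw [show x (i + (i0 + p)) = (shift^[i0+p] x) i from (shift_iter x _ _).symm]
          exact hagree i (by simp at h1; omega)
  · intro hlc
    classical
    set L := w.length with hL
    refine ⟨fun k => if h : k < L then w[k] else 0, ?_, 0, ?_⟩
    · intro i
      by_cases hi : i < L
      · by_cases hM : w[i] = M m
        · rcases hlc i hi hM with heq | ⟨j, hju, hjv, hagree, hlt⟩
          · have h7 : ∀ jj, (hjj : jj < L - i) → w[i + jj]'(by omega) = D d jj := by
              intro jj hjj
              have h8 : (w.drop i)[jj]'(by simp; omega)
                  = (pw d (w.length - i))[jj]'(by simp; omega) := by simp only [heq]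
              rw [List.getElem_drop, pw_getElem] at h8
              exact h8
            refine Or.inr ⟨L - i, ?_, ?_⟩
            · intro j hj
              rw [shift_iter, show j + i = i + j from by omega]
              have hji : i + j < L := by omega
              simp only [dif_pos hji]
              exact h7 j (by omega)
            · rw [shift_iter]
              have : ¬ (L - i + i < L) := by omega
              simp only [dif_neg this]
              rw [Fin.lt_def]
              have := D_val_pos d (show 1 ≤ L - i by omega)
              simp only [Fin.val_zero]
              omega
          · have hjlen : j < L - i := by simpa using hju
            refine Or.inr ⟨j, ?_, ?_⟩
            · intro j' hj'
              rw [shift_iter, show j' + i = i + j' from by omega]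
              have hji : i + j' < L := by omega
              simp only [dif_pos hji]
              have h5 := hagree j' (by simp; omega) (by simp; omega) hj'
              simp only [List.get_eq_getElem, List.getElem_drop, pw_getElem] at h5
              exact h5
            · rw [shift_iter, show j + i = i + j from by omega]
              have hji : i + j < L := by omega
              simp only [dif_pos hji]
              simp only [List.get_eq_getElem, List.getElem_drop, pw_getElem] at hlt
              exact hlt
        · refine Or.inr ⟨0, fun j hj => absurd hj (by omega), ?_⟩
          rw [shift_iter]
          simp only [zero_add, dif_pos hi]
          rw [Fin.lt_def, D_zero]
          have h1 : w[i].val < m + 2 := (w[i]).isLt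
          have h2 : w[i].val ≠ m + 1 := fun h => hM (Fin.ext h)
          simp only [M]
          omega
      · refine Or.inr ⟨0, fun j hj => absurd hj (by omega), ?_⟩
        rw [shift_iter]
        simp only [zero_add, dif_neg hi]
        rw [Fin.lt_def, D_zero]
        simp [M]
    · intro j
      simp only [zero_add, List.get_eq_getElem]
      have : (j : ℕ) < L := j.isLt
      simp [this]


lemma wordle_append_iff (u w : List (Fin (m + 2))) :
    WordLe (u ++ w) (pw d (u.length + w.length)) ↔
      (WLt u (pw d u.length) ∨ (u = pw d u.length ∧ WordLe w (win d w.length u.length))) := by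
  constructor
  · rintro (heq | ⟨i, hu, hv, hagree, hlt⟩)
    · rw [pw_add] at heq
      obtain ⟨h1, h2⟩ := List.append_inj heq (by simp)
      exact Or.inr ⟨h1, Or.inl h2⟩
    · simp only [List.length_append, pw_length] at hu hv
      by_cases hi : i < u.length
      · refine Or.inl ⟨i, by omega, by simp only [pw_length]; omega, ?_, ?_⟩
        · intro j hju hjv hj
          have := hagree j (by simp only [List.length_append]; omega)
            (by simp only [pw_length]; omega) hj
          simp only [List.get_eq_getElem, pw_getElem] at this ⊢
          rw [List.getElem_append_left (by omega)] at this
          exact this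
        · have := hlt
          simp only [List.get_eq_getElem, pw_getElem] at this ⊢
          rw [List.getElem_append_left (by omega)] at this
          exact this
      · have hequ : u = pw d u.length := by
          apply List.ext_getElem (by simp)
          intro j h1 h2
          have := hagree j (by simp only [List.length_append]; omega)
            (by simp only [pw_length]; omega) (by omega)
          simp only [List.get_eq_getElem, pw_getElem] at this
          rw [List.getElem_append_left (by omega)] at this
          rw [pw_getElem]
          exact this
        refine Or.inr ⟨hequ, Or.inr ⟨i - u.length, by omega,
          by simp only [win_length]; omega, ?_, ?_⟩⟩
        · intro j hju hjv hj
          have := hagree (u.length + j) (by simp only [List.length_append]; omega)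
            (by simp only [pw_length]; omega) (by omega)
          simp only [List.get_eq_getElem, pw_getElem] at this
          rw [List.getElem_append_right (by omega)] at this
          simp only [List.get_eq_getElem, win_getElem]
          simp only [show u.length + j - u.length = j from by omega] at this
          exact this
        · have := hlt
          simp only [List.get_eq_getElem, pw_getElem, win_getElem] at this ⊢
          rw [List.getElem_append_right (by omega)] at this
          simp only [show u.length + (i - u.length) = i from by omega]
          exact this
  · rintro (⟨i, hu, hv, hagree, hlt⟩ | ⟨hequ, hww⟩)
    · simp only [pw_length] at hv
      refine Or.inr ⟨i, by simp only [List.length_append]; omega,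
        by simp only [pw_length]; omega, ?_, ?_⟩
      · intro j hju hjv hj
        have := hagree j (by omega) (by simp only [pw_length]; omega) hj
        simp only [List.get_eq_getElem, pw_getElem] at this ⊢
        rw [List.getElem_append_left (by omega)]
        exact this
      · have := hlt
        simp only [List.get_eq_getElem, pw_getElem] at this ⊢
        rw [List.getElem_append_left (by omega)]
        exact this
    · rcases hww with heqw | ⟨i, hu2, hv2, hagree, hlt⟩
      · left
        rw [pw_add, ← hequ, ← heqw]
      · simp only [win_length] at hv2
        refine Or.inr ⟨u.length + i, by simp only [List.length_append]; omega,
          by simp only [pw_length]; omega, ?_, ?_⟩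
        · intro j hju hjv hj
          simp only [List.get_eq_getElem, pw_getElem]
          by_cases hjt : j < u.length
          · rw [List.getElem_append_left (by omega)]
            have := List.getElem_of_eq hequ (show j < u.length from by omega)
            rw [pw_getElem] at this
            exact this
          · rw [List.getElem_append_right (by omega)]
            have := hagree (j - u.length) (by omega) (by simp only [win_length]; omega) (by omega)
            simp only [List.get_eq_getElem, win_getElem] at this
            simp only [show u.length + (j - u.length) = j from by omega] at this
            exact this
        · simp only [List.get_eq_getElem, pw_getElem]
          rw [List.getElem_append_right (by omega)]
          have := hlt
          simp only [List.get_eq_getElem, win_getElem] at this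
          simp only [show u.length + i - u.length = i from by omega]
          exact this

lemma pred_iff (w : List (Fin (m + 2))) (hw : w ∈ Lang (D d)) (s : List (Fin (m + 2))) :
    s ∈ Pred (D d) w ↔ ∀ p (hp : p < s.length), s[p] = M m →
      (WLt (s.drop p) (pw d (s.length - p)) ∨
        (s.drop p = pw d (s.length - p) ∧ WordLe w (win d w.length (s.length - p)))) := by
  have hw' := (lang_iff d w).mp hw
  have hmem : s ∈ Pred (D d) w ↔ s ++ w ∈ Lang (D d) := Iff.rfl
  rw [hmem, lang_iff]
  have hdrop : ∀ p, p ≤ s.length → (s ++ w).drop p = s.drop p ++ w := by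
    intro p hp
    rw [List.drop_append, Nat.sub_eq_zero_of_le hp, List.drop_zero]
  constructor
  · intro h p hp hM
    have hp' : p < (s ++ w).length := by simp; omega
    have h1 := h p hp' (by rw [List.getElem_append_left hp]; exact hM)
    rw [hdrop p (by omega)] at h1
    rw [List.length_append] at h1
    rw [show s.length + w.length - p = (s.length - p) + w.length from by omega] at h1
    have h2 := (wordle_append_iff d (s.drop p) w)
    rw [List.length_drop] at h2
    exact h2.mp h1
  · intro h p hp hM
    simp only [List.length_append] at hp
    by_cases hps : p < s.length
    · rw [List.getElem_append_left hps] at hM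
      have h1 := h p hps hM
      rw [hdrop p (by omega), List.length_append]
      rw [show s.length + w.length - p = (s.length - p) + w.length from by omega]
      have h2 := (wordle_append_iff d (s.drop p) w)
      rw [List.length_drop] at h2
      exact h2.mpr h1
    · rw [List.getElem_append_right (by omega)] at hM
      have h1 := hw' (p - s.length) (by omega) hM
      rw [List.drop_append, List.drop_eq_nil_of_le (by omega), List.nil_append,
        List.length_append]
      rw [show s.length + w.length - p = w.length - (p - s.length) from by omega]
      exact h1

lemma wlt_irrefl (u : List (Fin (m + 2))) : ¬ WLt u u := by
  rintro ⟨i, hu, hv, -, hlt⟩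
  exact lt_irrefl _ hlt

lemma pw_mem_pred_iff (w : List (Fin (m + 2))) (hw : w ∈ Lang (D d)) (t : ℕ) (ht : 1 ≤ t) :
    pw d t ∈ Pred (D d) w ↔ WordLe w (win d w.length t) := by
  rw [pred_iff d w hw]
  constructor
  · intro h
    have h0 : (pw d t)[0]'(by simp; omega) = M m := by rw [pw_getElem]; rfl
    have h1 := h 0 (by simp; omega) h0
    simp only [List.drop_zero, Nat.sub_zero, pw_length] at h1
    rcases h1 with hlt | ⟨-, hle⟩
    · exact absurd hlt (wlt_irrefl _)
    · exact hle
  · intro hle p hp hM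
    simp only [pw_length] at hp
    have hp0 : p = 0 := by
      by_contra h0
      rw [pw_getElem] at hM
      exact D_ne_M d (by omega) hM
    subst hp0
    right
    refine ⟨by simp, ?_⟩
    simpa using hle

lemma pred_eq_of_T (w w' : List (Fin (m + 2))) (hw : w ∈ Lang (D d)) (hw' : w' ∈ Lang (D d))
    (hlen : w.length = w'.length)
    (hT : ∀ t, 1 ≤ t → (WordLe w (win d w.length t) ↔ WordLe w' (win d w'.length t))) :
    Pred (D d) w = Pred (D d) w' := by
  ext s
  rw [pred_iff d w hw, pred_iff d w' hw']
  refine forall_congr' fun p => forall_congr' fun hp => imp_congr_right fun _ =>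
    or_congr Iff.rfl (and_congr Iff.rfl ?_)
  exact hT (s.length - p) (by omega)

lemma T_eq_of_pred (w w' : List (Fin (m + 2))) (hw : w ∈ Lang (D d)) (hw' : w' ∈ Lang (D d))
    (hpred : Pred (D d) w = Pred (D d) w') :
    ∀ t, 1 ≤ t → (WordLe w (win d w.length t) ↔ WordLe w' (win d w'.length t)) := by
  intro t ht
  rw [← pw_mem_pred_iff d w hw t ht, ← pw_mem_pred_iff d w' hw' t ht, hpred]

lemma mem_lang_of_no_M (w : List (Fin (m + 2)))
    (h : ∀ p (hp : p < w.length), w[p] ≠ M m) : w ∈ Lang (D d) :=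
  (lang_iff d w).mpr fun p hp hM => absurd hM (h p hp)

lemma win_mem_lang (n t : ℕ) (ht : 1 ≤ t) : win d n t ∈ Lang (D d) := by
  apply mem_lang_of_no_M
  intro p hp
  rw [win_getElem]
  exact D_ne_M d (by omega)

lemma pw_mem_lang (n : ℕ) : pw d n ∈ Lang (D d) := by
  rw [lang_iff]
  intro p hp hM
  simp only [pw_length] at hp
  have hp0 : p = 0 := by
    by_contra h0
    rw [pw_getElem] at hM
    exact D_ne_M d (by omega) hM
  subst hp0
  left
  simp

lemma not_wordle_pw_win (n t : ℕ) (hn : 1 ≤ n) (ht : 1 ≤ t) :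
    ¬ WordLe (pw d n) (win d n t) := by
  rintro (heq | ⟨i, hu, hv, hagree, hlt⟩)
  · have h0 : (pw d n)[0]'(by simp only [pw_length]; omega)
        = (win d n t)[0]'(by simp only [win_length]; omega) := by simp only [heq]
    rw [pw_getElem, win_getElem] at h0
    have h1 : D d (t + 0) = M m := by rw [← h0]; rfl
    exact D_ne_M d (by omega) h1
  · simp only [pw_length] at hu
    cases i with
    | zero =>
      simp only [List.get_eq_getElem, pw_getElem, win_getElem] at hlt
      rw [Fin.lt_def] at hlt
      have h1 := D_val_le d (show 1 ≤ t + 0 by omega)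
      have h2 : (D d 0).val = m + 1 := rfl
      omega
    | succ i' =>
      have h0 := hagree 0 (by simp only [pw_length]; omega)
        (by simp only [win_length]; omega) (by omega)
      simp only [List.get_eq_getElem, pw_getElem, win_getElem] at h0
      have h1 : D d (t + 0) = M m := by rw [← h0]; rfl
      exact D_ne_M d (by omega) h1

def emb (a : Fin m) : Fin (m + 2) := ⟨a.val + 1, by have := a.isLt; omega⟩

def tr (u : List (Fin m)) : List (Fin (m + 2)) := u.map emb

@[simp] lemma tr_length (u : List (Fin m)) : (tr u).length = u.length := by simp [tr]

lemma emb_injective : Function.Injective (emb (m := m)) := by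
  intro a b h
  apply Fin.ext
  have : (emb a).val = (emb b).val := by rw [h]
  simpa [emb] using this

lemma tr_injective : Function.Injective (tr (m := m)) :=
  fun _ _ h => List.map_injective_iff.mpr emb_injective h

lemma tr_mem_lang (u : List (Fin m)) : tr u ∈ Lang (D d) := by
  apply mem_lang_of_no_M
  intro p hp
  have hp' : p < u.length := by simpa using hp
  rw [show (tr u)[p] = emb (u[p]'hp') from by simp [tr]]
  intro h
  have : (emb (u[p]'hp')).val = (M m).val := by rw [h]
  have hlt := (u[p]'hp').isLt
  simp [emb, M] at this
  omega

lemma win_succ_eq_tr (n t : ℕ) :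
    win d n (t + 1) = tr (List.ofFn fun j : Fin n => d (t + j)) := by
  apply List.ext_getElem (by simp)
  intro i h1 h2
  rw [win_getElem]
  have hi : i < n := by simpa using h1
  rw [show (tr (List.ofFn fun j : Fin n => d (t + j)))[i] = emb (d (t + i)) from by
    simp [tr]]
  rw [show t + 1 + i = (t + i) + 1 from by omega]
  rfl

lemma occurs_iff (n : ℕ) (u : List (Fin m)) (hlen : u.length = n) :
    Occurs u d ↔ ∃ t, u = List.ofFn fun j : Fin n => d (t + j) := by
  subst hlen
  constructor
  · rintro ⟨t, h⟩
    refine ⟨t, ?_⟩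
    apply List.ext_getElem (by simp)
    intro i h1 h2
    have := h ⟨i, h1⟩
    simp only [List.get_eq_getElem] at this
    simp [← this]
  · rintro ⟨t, hu⟩
    refine ⟨t, fun j => ?_⟩
    have hj : (j : ℕ) < u.length := j.isLt
    simp only [List.get_eq_getElem]
    conv_rhs => rw [List.getElem_of_eq hu hj]
    simp

lemma wset_finite (n : ℕ) : {u : List (Fin m) | u.length = n ∧ Occurs u d}.Finite := by
  apply Set.Finite.subset (Set.finite_range (fun f : Fin n → Fin m => List.ofFn f))
  rintro u ⟨hlen, hocc⟩
  obtain ⟨t, hu⟩ := (occurs_iff d n u hlen).mp hocc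
  exact ⟨fun j => d (t + j), hu.symm⟩

lemma pred_rep (n : ℕ) (hn : 1 ≤ n) (w : List (Fin (m + 2))) (hw : w ∈ Lang (D d))
    (hlen : w.length = n) :
    Pred (D d) w = Pred (D d) (pw d n) ∨
      ∃ t, Pred (D d) w = Pred (D d) (win d n (t + 1)) := by
  classical
  by_cases hNE : ∃ t, 1 ≤ t ∧ WordLe w (win d n t)
  · right
    have hne : {v | ∃ t, (1 ≤ t ∧ WordLe w (win d n t)) ∧ v = val (win d n t)}.Nonempty := by
      obtain ⟨t, ht⟩ := hNE
      exact ⟨val (win d n t), t, ht, rfl⟩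
    obtain ⟨t0, ht0, hval0⟩ := Nat.sInf_mem hne
    refine ⟨t0 - 1, ?_⟩
    rw [show t0 - 1 + 1 = t0 from by omega]
    apply pred_eq_of_T d w _ hw (win_mem_lang d n t0 ht0.1) (by simp [hlen])
    intro t ht
    rw [hlen, show (win d n t0).length = n from by simp]
    constructor
    · intro hwt
      have hmem : val (win d n t) ∈
          {v | ∃ t', (1 ≤ t' ∧ WordLe w (win d n t')) ∧ v = val (win d n t')} :=
        ⟨t, ⟨ht, hwt⟩, rfl⟩
      have h1 : val (win d n t0) ≤ val (win d n t) := by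
        rw [← hval0]
        exact Nat.sInf_le hmem
      exact (wordLe_iff_val_le (by simp)).mpr h1
    · intro h2
      have h3 : val w ≤ val (win d n t0) := (wordLe_iff_val_le (by simp [hlen])).mp ht0.2
      have h4 : val (win d n t0) ≤ val (win d n t) := (wordLe_iff_val_le (by simp)).mp h2
      exact (wordLe_iff_val_le (by simp [hlen])).mpr (le_trans h3 h4)
  · left
    apply pred_eq_of_T d w _ hw (pw_mem_lang d n) (by simp [hlen])
    intro t ht
    push_neg at hNE
    rw [hlen, show (pw d n).length = n from by simp]
    constructor
    · intro hwt
      exact absurd hwt (hNE t ht)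
    · intro hpw
      exact absurd hpw (not_wordle_pw_win d n t hn ht)

end Stmt12

open Stmt12

/-- for any sequence `d`, `{Φ_n(d) + 1}` is the predecessor set
sequence of some β-shift. -/
theorem stmt12 (m : ℕ) (hm : 1 ≤ m) (d : ℕ → Fin m) :
    ∃ m' : ℕ, 1 ≤ m' ∧ ∃ d' : ℕ → Fin m', Admissible d' ∧
      ∀ n, 1 ≤ n → PredCount d' n = Complexity d n + 1 := by
  classical
  refine ⟨m + 2, by omega, D d, admissible_D d, ?_⟩
  intro n hn
  have hWfin : {u : List (Fin m) | u.length = n ∧ Occurs u d}.Finite := wset_finite d n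
  have hrep : ∀ u ∈ {u : List (Fin m) | u.length = n ∧ Occurs u d},
      ∃ t, tr u = win d n (t + 1) := by
    intro u hu
    obtain ⟨t, hu'⟩ := (occurs_iff d n u hu.1).mp hu.2
    exact ⟨t, by rw [hu', win_succ_eq_tr]⟩
  have hx0 : ∀ u ∈ {u : List (Fin m) | u.length = n ∧ Occurs u d},
      Pred (D d) (tr u) ≠ Pred (D d) (pw d n) := by
    intro u hu heq
    obtain ⟨t, htr⟩ := hrep u hu
    have hiff := T_eq_of_pred d (tr u) (pw d n) (tr_mem_lang d u) (pw_mem_lang d n) heq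
      (t + 1) (by omega)
    rw [show (tr u).length = n from by rw [tr_length, hu.1]] at hiff
    rw [show (pw d n).length = n from by simp] at hiff
    exact not_wordle_pw_win d n (t + 1) hn (by omega) (hiff.mp (Or.inl htr))
  have hinj : Set.InjOn (fun u => Pred (D d) (tr u))
      {u : List (Fin m) | u.length = n ∧ Occurs u d} := by
    intro u hu u' hu' heq
    obtain ⟨t, htr⟩ := hrep u hu
    obtain ⟨t', htr'⟩ := hrep u' hu'
    have hlen : (tr u).length = n := by rw [tr_length, hu.1]
    have hlen' : (tr u').length = n := by rw [tr_length, hu'.1]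
    have hiff := T_eq_of_pred d (tr u) (tr u') (tr_mem_lang d u) (tr_mem_lang d u') heq
    rw [hlen, hlen'] at hiff
    have h1 : WordLe (tr u') (win d n (t + 1)) :=
      (hiff (t + 1) (by omega)).mp (Or.inl htr)
    have h2 : WordLe (tr u) (win d n (t' + 1)) :=
      (hiff (t' + 1) (by omega)).mpr (Or.inl htr')
    have v1 : val (tr u') ≤ val (tr u) := by
      have := (wordLe_iff_val_le (by rw [hlen']; simp)).mp h1
      rw [← htr] at this
      exact this
    have v2 : val (tr u) ≤ val (tr u') := by
      have := (wordLe_iff_val_le (by rw [hlen]; simp)).mp h2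
      rw [← htr'] at this
      exact this
    exact tr_injective (eq_of_val_eq (hlen.trans hlen'.symm) (le_antisymm v2 v1))
  have hkey : {S | ∃ w ∈ Lang (D d), w.length = n ∧ S = Pred (D d) w}
      = insert (Pred (D d) (pw d n))
          ((fun u => Pred (D d) (tr u)) '' {u : List (Fin m) | u.length = n ∧ Occurs u d}) := by
    ext S
    simp only [Set.mem_setOf_eq, Set.mem_insert_iff, Set.mem_image]
    constructor
    · rintro ⟨w, hw, hlenw, rfl⟩
      rcases pred_rep d n hn w hw hlenw with h | ⟨t, h⟩
      · exact Or.inl h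
      · right
        refine ⟨List.ofFn fun j : Fin n => d (t + j),
          ⟨by simp, (occurs_iff d n _ (by simp)).mpr ⟨t, rfl⟩⟩, ?_⟩
        show Pred (D d) (tr _) = Pred (D d) w
        rw [← win_succ_eq_tr d n t]
        exact h.symm
    · rintro (h | ⟨u, hu, rfl⟩)
      · exact ⟨pw d n, pw_mem_lang d n, by simp, h⟩
      · exact ⟨tr u, tr_mem_lang d u, by rw [tr_length, hu.1], rfl⟩
  have hnotmem : Pred (D d) (pw d n) ∉
      (fun u => Pred (D d) (tr u)) '' {u : List (Fin m) | u.length = n ∧ Occurs u d} := by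
    rintro ⟨u, hu, hequ⟩
    exact hx0 u hu hequ
  show PredCount (D d) n = Complexity d n + 1
  unfold PredCount Complexity
  rw [hkey, Set.ncard_insert_of_notMem hnotmem (hWfin.image _),
    Set.ncard_image_of_injOn hinj]
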